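/- Let a ∈ L^∞(0,1) satisfy a > 0 a.e. on (0,z), a < 0 a.e. on (z,1) for some z ∈ (0,1), and suppose either ∫₀^z (∫_x^z a(t)dt)^{-1/2} dx = ∞ or ∫_z^1 (∫_x^z a(t)dt)^{-1/2} dx = ∞. Let f be continuous with f(u) ≥ 0 for u ≥ 0, λ > 0, and let u be a bounded nonnegative function that solves -(u'/√(1+(u')²))' = λ a(x) f(u) in the bounded-variation sense, being W^{2,1}_loc and concave on (0,z), W^{2,1}_loc and convex on (z,1). If u'(z⁻) = -∞ = u'(z⁺), then a contradiction follows; hence u ∈ W^{2,1}_loc(0,1), i.e., u is regular. -/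

import Mathlib

open Filter Set MeasureTheory

open Topology

lemma sq_sqrt_one_add (t : ℝ) : Real.sqrt (1 + t^2) ^ 2 = 1 + t^2 :=
  Real.sq_sqrt (by positivity)

lemma sqrt_one_add_pos (t : ℝ) : 0 < Real.sqrt (1 + t^2) :=
  Real.sqrt_pos.2 (by positivity)

lemma abs_le_sqrt_one_add (t : ℝ) : |t| ≤ Real.sqrt (1 + t^2) := by
  have h : Real.sqrt (t^2) ≤ Real.sqrt (1 + t^2) := Real.sqrt_le_sqrt (by nlinarith)
  simpa [Real.sqrt_sq_eq_abs] using h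

lemma abs_lt_sqrt_one_add (t : ℝ) : |t| < Real.sqrt (1 + t^2) := by
  have h : Real.sqrt (t^2) < Real.sqrt (1 + t^2) :=
    Real.sqrt_lt_sqrt (sq_nonneg t) (by nlinarith)
  simpa [Real.sqrt_sq_eq_abs] using h

lemma sub_pos_sqrt (t : ℝ) : 0 < Real.sqrt (1 + t^2) - t :=
  sub_pos.2 (lt_of_le_of_lt (le_abs_self t) (abs_lt_sqrt_one_add t))

lemma one_add_phi_eq (t : ℝ) :
    1 + t / Real.sqrt (1 + t^2) =
      1 / (Real.sqrt (1 + t^2) * (Real.sqrt (1 + t^2) - t)) := by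
  have h2 := sq_sqrt_one_add t
  have h0 := sqrt_one_add_pos t
  have hst := sub_pos_sqrt t
  field_simp
  nlinarith [h2]

lemma auxL2 (t : ℝ) : 1/(2*(1+t^2)) ≤ 1 + t / Real.sqrt (1 + t^2) := by
  rw [one_add_phi_eq]
  have h2 := sq_sqrt_one_add t
  have h0 := sqrt_one_add_pos t
  have hst := sub_pos_sqrt t
  have h3 : -t ≤ Real.sqrt (1 + t^2) := by
    have := (abs_le.1 (abs_le_sqrt_one_add t)).1; linarith
  apply one_div_le_one_div_of_le (by positivity)
  nlinarith [h2, h0, h3]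

lemma auxL1 {t : ℝ} (ht : t < 0) : 1 + t / Real.sqrt (1 + t^2) ≤ 1/(2*t^2) := by
  rw [one_add_phi_eq]
  have h2 := sq_sqrt_one_add t
  have h0 := sqrt_one_add_pos t
  have h3 : -t ≤ Real.sqrt (1 + t^2) := by
    have := (abs_le.1 (abs_le_sqrt_one_add t)).1; linarith
  apply one_div_le_one_div_of_le (by nlinarith)
  nlinarith [mul_nonneg (by linarith : (0:ℝ) ≤ Real.sqrt (1 + t^2) - 2*t)
    (by linarith : (0:ℝ) ≤ Real.sqrt (1 + t^2) + t)]

lemma phi_abs_lt_one (t : ℝ) : |t / Real.sqrt (1+t^2)| < 1 := by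
  rw [abs_div, abs_of_pos (sqrt_one_add_pos t)]
  exact (div_lt_one (sqrt_one_add_pos t)).2 (abs_lt_sqrt_one_add t)

lemma phi_inv (t : ℝ) :
    (t / Real.sqrt (1+t^2)) / Real.sqrt (1 - (t / Real.sqrt (1+t^2))^2) = t := by
  have h2 := sq_sqrt_one_add t
  have h0 := sqrt_one_add_pos t
  have key : 1 - (t / Real.sqrt (1+t^2))^2 = (1 / Real.sqrt (1+t^2))^2 := by
    rw [div_pow, div_pow, h2]
    field_simp
    ring
  rw [key, Real.sqrt_sq (by positivity)]
  field_simp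

lemma pos_setIntegral {g : ℝ → ℝ} {x y : ℝ} (hxy : x < y)
    (hi : IntegrableOn g (Ioc x y) volume)
    (hae : ∀ᵐ t ∂(volume.restrict (Ioc x y)), 0 < g t) :
    0 < ∫ t in Ioc x y, g t := by
  rw [setIntegral_pos_iff_support_of_nonneg_ae (hae.mono fun t ht => ht.le) hi]
  have h0 : volume ({t | ¬ (0 < g t)} ∩ Ioc x y) = 0 := by
    have := ae_iff.1 hae
    rwa [Measure.restrict_apply' measurableSet_Ioc] at this
  have hsub : Ioc x y ⊆ (Function.support g ∩ Ioc x y) ∪ ({t | ¬ (0 < g t)} ∩ Ioc x y) := by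
    intro t ht
    by_cases h : 0 < g t
    · exact Or.inl ⟨ne_of_gt h, ht⟩
    · exact Or.inr ⟨h, ht⟩
  have hle : volume (Ioc x y) ≤
      volume (Function.support g ∩ Ioc x y) + volume ({t | ¬ (0 < g t)} ∩ Ioc x y) :=
    (measure_mono hsub).trans (measure_union_le _ _)
  rw [h0, add_zero] at hle
  calc (0:ENNReal) < volume (Ioc x y) := by
        rw [Real.volume_Ioc]
        exact ENNReal.ofReal_pos.2 (by linarith)
    _ ≤ _ := hle


set_option maxHeartbeats 1000000 in
theorem left_case (a f : ℝ → ℝ) (lam z : ℝ) (u u' : ℝ → ℝ)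
    (hz0 : 0 < z) (hz1 : z < 1)
    (hapos : ∀ᵐ x ∂(volume.restrict (Ioo (0:ℝ) z)), 0 < a x)
    (hf : Continuous f) (hfnn : ∀ s, 0 ≤ s → 0 ≤ f s)
    (hlam : 0 < lam)
    (hubdd : ∃ C, ∀ x ∈ Icc (0:ℝ) 1, |u x| ≤ C)
    (hunn : ∀ x ∈ Icc (0:ℝ) 1, 0 ≤ u x)
    (hderiv : ∀ x ∈ (Ioo (0:ℝ) 1) \ {z}, HasDerivAt u (u' x) x)
    (hFTC1 : ∀ x ∈ Ioo (0:ℝ) z, ∀ y ∈ Ioo (0:ℝ) z,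
      u' y / Real.sqrt (1 + (u' y) ^ 2) - u' x / Real.sqrt (1 + (u' x) ^ 2)
        = -∫ t in x..y, lam * a t * f (u t))
    (hL : Tendsto u' (nhdsWithin z (Iio z)) atBot) :
    IntegrableOn (fun x => (∫ t in x..z, a t) ^ (-(1:ℝ)/2)) (Ioo 0 z) volume := by
  obtain ⟨Cu, hCu⟩ := hubdd
  have hCu0 : 0 ≤ Cu := le_trans (abs_nonneg _) (hCu 0 ⟨le_rfl, by linarith⟩)
  obtain ⟨xm, hxm, hmax⟩ := (isCompact_Icc (a := -Cu) (b := Cu)).exists_isMaxOn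
    (nonempty_Icc.2 (by linarith)) hf.continuousOn
  set M : ℝ := max (f xm) 0 + 1 with hM
  have hM1 : 1 ≤ M := by
    have := le_max_right (f xm) (0:ℝ); simp only [hM]; linarith
  have hM0 : 0 < M := by linarith
  have hfub : ∀ t, t ∈ Icc (0:ℝ) 1 → f (u t) ≤ M := by
    intro t ht
    have h1 : u t ∈ Icc (-Cu) Cu := abs_le.1 (hCu t ht)
    have := hmax h1
    simp only [hM]
    calc f (u t) ≤ f xm := this
      _ ≤ max (f xm) 0 + 1 := by linarith [le_max_left (f xm) (0:ℝ)]
  have hlamM : 0 < lam * M := by positivity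
  -- notation
  set F : ℝ → ℝ := fun x => (∫ t in x..z, a t) ^ (-(1:ℝ)/2) with hF
  by_cases hS : ∃ x0 ∈ Ioo (0:ℝ) z, IntervalIntegrable a volume x0 z
  swap
  · push_neg at hS
    have heq : EqOn F 0 (Ioo 0 z) := by
      intro x hx
      simp only [hF, Pi.zero_apply]
      rw [intervalIntegral.integral_undef (hS x hx), Real.zero_rpow (by norm_num)]
    exact (integrableOn_congr_fun heq measurableSet_Ioo).2 (integrableOn_zero)
  obtain ⟨x0, hx00, hx0int⟩ := hS
  have hx0z : x0 < z := hx00.2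
  have hx0pos : 0 < x0 := hx00.1
  -- interval integrability to the right of x0
  have hint : ∀ x, x0 ≤ x → x ≤ z → IntervalIntegrable a volume x z := by
    intro x h1 h2
    apply hx0int.mono_set
    rw [uIcc_of_le h2, uIcc_of_le hx0z.le]
    exact Icc_subset_Icc h1 le_rfl
  -- positivity of A
  have hApos : ∀ x, 0 < x → x < z → IntervalIntegrable a volume x z →
      0 < ∫ t in x..z, a t := by
    intro x h1 h2 hi
    rw [intervalIntegral.integral_of_le h2.le]
    apply pos_setIntegral h2 ((intervalIntegrable_iff_integrableOn_Ioc_of_le h2.le).1 hi)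
    rw [← Measure.restrict_congr_set Ioo_ae_eq_Ioc]
    exact ae_restrict_of_ae_restrict_of_subset
      (Ioo_subset_Ioo (le_of_lt h1) le_rfl) hapos
  -- continuity of A on Icc x0' z
  set x0' : ℝ := (x0 + z)/2 with hx0'
  have hx0'1 : x0 < x0' := by simp [hx0']; linarith
  have hx0'2 : x0' < z := by simp [hx0']; linarith
  have hx0'pos : 0 < x0' := by linarith
  have hAcont : ContinuousOn (fun x => ∫ t in x..z, a t) (Icc x0' z) := by
    have h1 : IntegrableOn a (Icc x0' z) volume :=
      ((intervalIntegrable_iff_integrableOn_Ioc_of_le hx0z.le).1 hx0int).mono_set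
        (fun t ht => ⟨lt_of_lt_of_le hx0'1 ht.1, ht.2⟩)
    have := intervalIntegral.continuousOn_primitive_interval_left
      (a := x0') (b := z) (μ := volume) (f := a) (by rwa [uIcc_of_le hx0'2.le])
    rwa [uIcc_of_le hx0'2.le] at this
  -- A tends to 0 at z from the left
  have hA0 : Tendsto (fun x => ∫ t in x..z, a t) (nhdsWithin z (Iio z)) (𝓝 0) := by
    have hc : ContinuousWithinAt (fun x => ∫ t in x..z, a t) (Icc x0' z) z :=
      hAcont z (right_mem_Icc.2 hx0'2.le)
    have hz' : (∫ t in z..z, a t) = 0 := intervalIntegral.integral_same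
    have hc' : Tendsto (fun x => ∫ t in x..z, a t) (nhdsWithin z (Icc x0' z)) (𝓝 0) := by
      rw [← hz']; exact hc
    exact hc'.mono_left (nhdsWithin_le_of_mem
      (mem_of_superset (Ioo_mem_nhdsLT hx0'2) Ioo_subset_Icc_self))
  -- choose threshold x3
  have e1 : ∀ᶠ x in nhdsWithin z (Iio z), u' x < 0 := hL.eventually (eventually_lt_atBot 0)
  have e3 : ∀ᶠ x in nhdsWithin z (Iio z), (∫ t in x..z, a t) < 1/(4*(lam*M)) :=
    hA0.eventually (eventually_lt_nhds (by positivity))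
  have e2 : ∀ᶠ x in nhdsWithin z (Iio z), x ∈ Ioo x0' z := by
    filter_upwards [Ioo_mem_nhdsLT hx0'2] with x hx using hx
  obtain ⟨l, hlz, hlsub⟩ := mem_nhdsLT_iff_exists_Ioo_subset.1 (e1.and (e2.and e3))
  set x3 : ℝ := max l x0' with hx3
  have hx3z : x3 < z := max_lt hlz hx0'2
  have hx3ge : x0' ≤ x3 := le_max_right _ _
  have hx3prop : ∀ x, x ∈ Ioo x3 z → u' x < 0 ∧ x ∈ Ioo x0' z ∧
      (∫ t in x..z, a t) < 1/(4*(lam*M)) := by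
    intro x hx
    have := hlsub ⟨lt_of_le_of_lt (le_max_left l x0') hx.1, hx.2⟩
    exact ⟨this.1, this.2.1, this.2.2⟩
  -- continuity of u' on compact subintervals near z
  have hfu_cont : ∀ p q : ℝ, 0 < p → q < z → ContinuousOn (fun t => f (u t)) (Icc p q) := by
    intro p q hp hq
    intro t ht
    have htmem : t ∈ (Ioo (0:ℝ) 1) \ {z} := by
      constructor
      · exact ⟨lt_of_lt_of_le hp ht.1, by linarith [ht.2]⟩
      · simp only [mem_singleton_iff]
        intro hc; rw [hc] at ht; linarith [ht.2]
    exact (hf.continuousAt.comp (hderiv t htmem).continuousAt).continuousWithinAt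
  set c : ℝ := (x3 + z)/2 with hc
  have hcx3 : x3 < c := by simp [hc]; linarith
  have hcz : c < z := by simp [hc]; linarith
  have hcpos : 0 < c := by linarith [lt_of_lt_of_le hx0'pos hx3ge]
  have hu'cont : ∀ y, y ∈ Ico c z → ContinuousOn u' (Icc c y) := by
    intro y hy
    have hcy : c ≤ y := hy.1
    have hyz : y < z := hy.2
    have hfu : ContinuousOn (fun t => f (u t)) (Icc c y) := hfu_cont c y hcpos hyz
    have hca : IntervalIntegrable a volume c y :=
      (hint c (by linarith [hx3ge, hcx3, hx0'1]) hcz.le).mono_set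
        (by rw [uIcc_of_le hcy, uIcc_of_le hcz.le]; exact Icc_subset_Icc le_rfl hyz.le)
    have hh_int : IntervalIntegrable (fun t => lam * a t * f (u t)) volume c y := by
      apply IntervalIntegrable.mul_continuousOn (hca.const_mul lam)
      rwa [uIcc_of_le hcy]
    set ψ : ℝ → ℝ := fun t =>
      u' c / Real.sqrt (1 + (u' c)^2) - ∫ s in c..t, lam * a s * f (u s) with hψdef
    have hψφ : ∀ t ∈ Icc c y, ψ t = u' t / Real.sqrt (1 + (u' t)^2) := by
      intro t ht
      have hcI : c ∈ Ioo (0:ℝ) z := ⟨hcpos, hcz⟩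
      have htI : t ∈ Ioo (0:ℝ) z := ⟨lt_of_lt_of_le hcpos ht.1, lt_of_le_of_lt ht.2 hyz⟩
      have := hFTC1 c hcI t htI
      simp only [hψdef]
      linarith [this]
    have hψcont : ContinuousOn ψ (Icc c y) := by
      apply continuousOn_const.sub
      have := intervalIntegral.continuousOn_primitive_interval (a := c) (b := y) (μ := volume)
        (f := fun t => lam * a t * f (u t)) ((intervalIntegrable_iff' enorm_ne_top).1 hh_int)
      rwa [uIcc_of_le hcy] at this
    have hsq : ∀ t ∈ Icc c y, Real.sqrt (1 - ψ t^2) ≠ 0 := by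
      intro t ht
      have h1 : |ψ t| < 1 := by rw [hψφ t ht]; exact phi_abs_lt_one _
      have h2 : ψ t ^ 2 < 1 := by nlinarith [abs_lt.1 h1]
      exact ne_of_gt (Real.sqrt_pos.2 (by linarith))
    apply ContinuousOn.congr
      (f := fun t => ψ t / Real.sqrt (1 - ψ t ^2))
      (hψcont.div ((continuousOn_const.sub (hψcont.pow 2)).sqrt) hsq)
    intro t ht
    simp only [hψφ t ht]
    exact (phi_inv (u' t)).symm
  -- the key pointwise estimate
  have key : ∀ x, x ∈ Ioo x3 z →
      (∫ t in x..z, a t) ^ (-(1:ℝ)/2) ≤ Real.sqrt (4*(lam*M)) * (-u' x) := by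
    intro x hx
    obtain ⟨hu'x, hx', hAxlt⟩ := hx3prop x hx
    have hxpos : 0 < x := lt_trans hx0'pos hx'.1
    have hxz : x < z := hx.2
    have hxint : IntervalIntegrable a volume x z := hint x (by linarith [hx'.1]) hxz.le
    have hAx : 0 < ∫ t in x..z, a t := hApos x hxpos hxz hxint
    -- step 1 : 1 + phi x ≤ lam * M * A x
    have step1 : 1 + u' x / Real.sqrt (1 + (u' x)^2) ≤ lam * M * ∫ t in x..z, a t := by
      apply le_of_forall_pos_le_add
      intro ε hε
      have ev1 : ∀ᶠ y in nhdsWithin z (Iio z),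
          u' y ≤ -(Real.sqrt (1/(2*ε)) + 1) := hL.eventually (eventually_le_atBot _)
      have ev2 : ∀ᶠ y in nhdsWithin z (Iio z), y ∈ Ioo x z := by
        filter_upwards [Ioo_mem_nhdsLT hxz] with y hy using hy
      obtain ⟨y, hy1, hy2⟩ := (ev1.and ev2).exists
      have hsq0 : 0 ≤ Real.sqrt (1/(2*ε)) := Real.sqrt_nonneg _
      have hy0 : u' y < 0 := by linarith
      have hφy : 1 + u' y / Real.sqrt (1 + (u' y)^2) ≤ ε := by
        have h1 := auxL1 hy0
        have h2 : Real.sqrt (1/(2*ε)) ^ 2 = 1/(2*ε) := Real.sq_sqrt (by positivity)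
        have h3 : 1/(2*ε) ≤ (u' y)^2 := by nlinarith
        have h4 : 1/(2*(u' y)^2) ≤ ε := by
          rw [div_le_iff₀ (by nlinarith : (0:ℝ) < 2*(u' y)^2)]
          rw [div_le_iff₀ (by positivity)] at h3
          nlinarith
        linarith
      have hxy : x ≤ y := hy2.1.le
      have hxI : x ∈ Ioo (0:ℝ) z := ⟨hxpos, hxz⟩
      have hyI : y ∈ Ioo (0:ℝ) z := ⟨by linarith [hy2.1], hy2.2⟩
      have hFT := hFTC1 x hxI y hyI
      have hay : IntervalIntegrable a volume x y := hxint.mono_set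
        (by rw [uIcc_of_le hxy, uIcc_of_le hxz.le]; exact Icc_subset_Icc le_rfl hy2.2.le)
      have hh_int : IntervalIntegrable (fun t => lam * a t * f (u t)) volume x y := by
        apply IntervalIntegrable.mul_continuousOn (hay.const_mul lam)
        rw [uIcc_of_le hxy]
        exact hfu_cont x y hxpos hy2.2
      have hma : IntervalIntegrable (fun t => lam * M * a t) volume x y :=
        hay.const_mul (lam * M)
      have hmono : (∫ t in x..y, lam * a t * f (u t)) ≤ ∫ t in x..y, lam * M * a t := by
        apply intervalIntegral.integral_mono_ae_restrict hxy hh_int hma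
        have hpos' : ∀ᵐ t ∂(volume.restrict (Icc x y)), 0 < a t := by
          rw [← Measure.restrict_congr_set Ioo_ae_eq_Icc]
          exact ae_restrict_of_ae_restrict_of_subset
            (Ioo_subset_Ioo hxpos.le (by linarith [hy2.2])) hapos
        filter_upwards [hpos', ae_restrict_mem measurableSet_Icc] with t hta htmem
        have ht01 : t ∈ Icc (0:ℝ) 1 :=
          ⟨by linarith [htmem.1], by linarith [htmem.2, hy2.2]⟩
        have h5 : 0 ≤ f (u t) := hfnn _ (hunn t ht01)
        have h6 : f (u t) ≤ M := hfub t ht01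
        nlinarith [mul_nonneg (mul_pos hlam hta).le (sub_nonneg.2 h6)]
      have h7 : IntervalIntegrable a volume y z := hint y (by linarith [hy2.1, hx'.1]) hy2.2.le
      have hsplit : (∫ t in x..y, a t) = (∫ t in x..z, a t) - ∫ t in y..z, a t := by
        have := intervalIntegral.integral_add_adjacent_intervals hay h7
        linarith
      have hAy : 0 ≤ ∫ t in y..z, a t := by
        rw [intervalIntegral.integral_of_le hy2.2.le]
        apply setIntegral_nonneg_of_ae_restrict
        have : ∀ᵐ t ∂(volume.restrict (Ioc y z)), 0 < a t := by
          rw [← Measure.restrict_congr_set Ioo_ae_eq_Ioc]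
          exact ae_restrict_of_ae_restrict_of_subset
            (Ioo_subset_Ioo (by linarith [hy2.1]) le_rfl) hapos
        exact this.mono fun t ht => ht.le
      have hcalc : (∫ t in x..y, lam * M * a t) = lam * M * ∫ t in x..y, a t := by
        simpa using intervalIntegral.integral_const_mul (lam * M) a (a := x) (b := y)
      have hcomb : u' x / Real.sqrt (1 + (u' x)^2) - u' y / Real.sqrt (1 + (u' y)^2)
          ≤ lam * M * ∫ t in x..z, a t := by
        have h8 : u' x / Real.sqrt (1 + (u' x)^2) - u' y / Real.sqrt (1 + (u' y)^2)
            = ∫ t in x..y, lam * a t * f (u t) := by linarith [hFT]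
        rw [h8]
        calc (∫ t in x..y, lam * a t * f (u t)) ≤ ∫ t in x..y, lam * M * a t := hmono
          _ = lam * M * ∫ t in x..y, a t := hcalc
          _ = lam * M * ((∫ t in x..z, a t) - ∫ t in y..z, a t) := by rw [hsplit]
          _ ≤ lam * M * ∫ t in x..z, a t := by nlinarith
      linarith
    -- step 2 : chain of inequalities
    have step2 : 1/(2*(1+(u' x)^2)) ≤ lam * M * ∫ t in x..z, a t :=
      le_trans (auxL2 (u' x)) step1
    have h9 : 1 ≤ 2 * (lam * M * ∫ t in x..z, a t) * (1+(u' x)^2) := by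
      rw [div_le_iff₀ (by positivity)] at step2
      linarith
    have hA4 : lam * M * (∫ t in x..z, a t) ≤ 1/4 := by
      rw [lt_div_iff₀ (by positivity)] at hAxlt
      nlinarith
    have h10 : 1/(4*(lam*M)*(∫ t in x..z, a t)) ≤ (u' x)^2 := by
      rw [div_le_iff₀ (by positivity)]
      nlinarith [sq_nonneg (u' x)]
    have h11 : Real.sqrt (1/(4*(lam*M)*(∫ t in x..z, a t))) ≤ -u' x := by
      rw [show (-u' x) = |u' x| from (abs_of_neg hu'x).symm, ← Real.sqrt_sq_eq_abs]
      exact Real.sqrt_le_sqrt h10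
    have h12 : (∫ t in x..z, a t) ^ (-(1:ℝ)/2) = 1/Real.sqrt (∫ t in x..z, a t) := by
      rw [show (-(1:ℝ)/2) = -(1/2 : ℝ) by norm_num, Real.rpow_neg hAx.le,
        ← Real.sqrt_eq_rpow, one_div]
    rw [h12]
    have h13 : Real.sqrt (1/(4*(lam*M)*(∫ t in x..z, a t)))
        = 1/(Real.sqrt (4*(lam*M)) * Real.sqrt (∫ t in x..z, a t)) := by
      rw [one_div, Real.sqrt_inv, Real.sqrt_mul (by positivity), one_div]
    rw [h13] at h11
    have hs4 : 0 < Real.sqrt (4*(lam*M)) := Real.sqrt_pos.2 (by positivity)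
    have hsA : 0 < Real.sqrt (∫ t in x..z, a t) := Real.sqrt_pos.2 hAx
    rw [div_le_iff₀ hsA]
    rw [div_le_iff₀ (by positivity)] at h11
    nlinarith
  -- rpow to sqrt helper
  have hrpow : ∀ {A : ℝ}, 0 < A → A ^ (-(1:ℝ)/2) = 1/Real.sqrt A := by
    intro A hA
    rw [show (-(1:ℝ)/2) = -(1/2 : ℝ) by norm_num, Real.rpow_neg hA.le,
      ← Real.sqrt_eq_rpow, one_div]
  -- integrability near z
  set b : ℕ → ℝ := fun n => z - (z-c)/(n+1) with hb
  have hbmem : ∀ n : ℕ, b n ∈ Ico c z := by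
    intro n
    have h1 : (0:ℝ) < (n:ℝ)+1 := by positivity
    have h2 : (z-c)/((n:ℝ)+1) ≤ z - c := by
      rw [div_le_iff₀ h1]
      nlinarith [hcz, Nat.cast_nonneg (α := ℝ) n]
    have h3 : 0 < (z-c)/((n:ℝ)+1) := by
      apply div_pos (by linarith) h1
    constructor
    · simp only [hb]; linarith
    · simp only [hb]; linarith
  have hbtend : Tendsto b atTop (𝓝 z) := by
    have h1 : Tendsto (fun n:ℕ => (z-c) * (1/((n:ℝ)+1))) atTop (𝓝 ((z-c)*0)) :=
      tendsto_const_nhds.mul tendsto_one_div_add_atTop_nhds_zero_nat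
    have h2 : Tendsto (fun n:ℕ => z - (z-c)*(1/((n:ℝ)+1))) atTop (𝓝 (z - (z-c)*0)) :=
      tendsto_const_nhds.sub h1
    simp only [mul_zero, sub_zero, mul_one_div] at h2
    exact h2
  have hx0'c : x0' < c := lt_of_le_of_lt hx3ge hcx3
  have hFcont : ∀ y, y ∈ Ico c z → ContinuousOn F (Icc c y) := by
    intro y hy
    show ContinuousOn (fun x => (∫ t in x..z, a t) ^ (-(1:ℝ)/2)) (Icc c y)
    apply ContinuousOn.rpow_const
    · apply hAcont.mono
      intro t ht
      exact ⟨le_trans hx0'c.le ht.1, le_trans ht.2 hy.2.le⟩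
    · intro t ht
      left
      have htpos : 0 < t := lt_of_lt_of_le hcpos ht.1
      have htz : t < z := lt_of_le_of_lt ht.2 hy.2
      exact ne_of_gt (hApos t htpos htz (hint t (by linarith [hx0'1, hx0'c, ht.1]) htz.le))
  have hFint : ∀ n : ℕ, IntegrableOn F (Ioc c (b n)) volume := by
    intro n
    exact ((hFcont _ (hbmem n)).integrableOn_Icc).mono_set Ioc_subset_Icc_self
  have hKbound : ∀ n : ℕ, (∫ x in Ioc c (b n), ‖F x‖) ≤ Real.sqrt (4*(lam*M)) * (2*Cu) := by
    intro n
    obtain ⟨hcb, hbz⟩ := hbmem n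
    have hsubset : Icc c (b n) ⊆ Ioo x3 z := fun t ht =>
      ⟨lt_of_lt_of_le hcx3 ht.1, lt_of_le_of_lt ht.2 hbz⟩
    have hu'c : ContinuousOn u' (Icc c (b n)) := hu'cont _ ⟨hcb, hbz⟩
    have hFc : ContinuousOn F (Icc c (b n)) := hFcont _ ⟨hcb, hbz⟩
    have hint1 : IntervalIntegrable (fun x => ‖F x‖) volume c (b n) := by
      apply ContinuousOn.intervalIntegrable
      rw [uIcc_of_le hcb]; exact hFc.norm
    have hint2 : IntervalIntegrable (fun x => Real.sqrt (4*(lam*M)) * (-u' x)) volume c (b n) := by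
      apply ContinuousOn.intervalIntegrable
      rw [uIcc_of_le hcb]
      exact continuousOn_const.mul hu'c.neg
    have hu'int : IntervalIntegrable u' volume c (b n) := by
      apply ContinuousOn.intervalIntegrable
      rwa [uIcc_of_le hcb]
    have hFTCu : (∫ t in c..(b n), u' t) = u (b n) - u c := by
      apply intervalIntegral.integral_eq_sub_of_hasDerivAt _ hu'int
      intro t ht
      rw [uIcc_of_le hcb] at ht
      apply hderiv
      refine ⟨⟨lt_of_lt_of_le hcpos ht.1, by linarith [ht.2, hbz]⟩, ?_⟩
      simp only [mem_singleton_iff]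
      intro hcEq
      rw [hcEq] at ht
      linarith [ht.2]
    rw [← intervalIntegral.integral_of_le hcb]
    have hmono2 : (∫ x in c..(b n), ‖F x‖)
        ≤ ∫ x in c..(b n), Real.sqrt (4*(lam*M)) * (-u' x) := by
      apply intervalIntegral.integral_mono_on hcb hint1 hint2
      intro t ht
      have htm := hsubset ht
      have htpos : 0 < t := lt_of_lt_of_le hcpos ht.1
      have htz : t < z := htm.2
      have hFnn : 0 ≤ F t :=
        Real.rpow_nonneg (le_of_lt (hApos t htpos htz
          (hint t (by linarith [hx0'1, hx0'c, ht.1]) htz.le))) _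
      rw [Real.norm_eq_abs, abs_of_nonneg hFnn]
      exact key t htm
    have hval : (∫ x in c..(b n), Real.sqrt (4*(lam*M)) * (-u' x))
        = Real.sqrt (4*(lam*M)) * (u c - u (b n)) := by
      have h1 : (∫ x in c..(b n), Real.sqrt (4*(lam*M)) * (-u' x))
          = Real.sqrt (4*(lam*M)) * ∫ x in c..(b n), (-u' x) := by
        simpa using intervalIntegral.integral_const_mul (Real.sqrt (4*(lam*M))) (fun x => -u' x)
          (a := c) (b := b n)
      rw [h1, intervalIntegral.integral_neg, hFTCu]
      ring
    have hfin : Real.sqrt (4*(lam*M)) * (u c - u (b n)) ≤ Real.sqrt (4*(lam*M)) * (2*Cu) := by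
      apply mul_le_mul_of_nonneg_left _ (Real.sqrt_nonneg _)
      have h1 := abs_le.1 (hCu c ⟨hcpos.le, by linarith⟩)
      have h2 := abs_le.1 (hCu (b n) ⟨by linarith [hcpos], by linarith⟩)
      linarith [h1.1, h1.2, h2.1, h2.2]
    calc (∫ x in c..(b n), ‖F x‖) ≤ _ := hmono2
      _ = _ := hval
      _ ≤ _ := hfin
  have hnear : IntegrableOn F (Ioc c z) volume :=
    MeasureTheory.integrableOn_Ioc_of_intervalIntegral_norm_bounded_right hFint hbtend
      (Eventually.of_forall hKbound)
  -- far region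
  set T : Set ℝ := {t : ℝ | 0 < t ∧ IntervalIntegrable a volume t z} with hT
  have hTne : T.Nonempty := ⟨x0, hx0pos, hx0int⟩
  have hTbd : BddBelow T := ⟨0, fun t ht => ht.1.le⟩
  set sI : ℝ := sInf T with hsI
  have hsI_le : sI ≤ x0 := csInf_le hTbd ⟨hx0pos, hx0int⟩
  have hsI0 : 0 ≤ sI := le_csInf hTne (fun t ht => ht.1.le)
  have hsIc : sI < c := by linarith [hx0'1, hx3ge, hcx3]
  have hintgt : ∀ t, sI < t → t < z → IntervalIntegrable a volume t z := by
    intro t h1 h2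
    obtain ⟨t', ht'T, ht'lt⟩ := exists_lt_of_csInf_lt hTne h1
    apply ht'T.2.mono_set
    rw [uIcc_of_le h2.le, uIcc_of_le (le_trans ht'lt.le h2.le)]
    exact Icc_subset_Icc ht'lt.le le_rfl
  have hFzero : ∀ t, 0 < t → t < sI → F t = 0 := by
    intro t h1 h2
    have hni : ¬ IntervalIntegrable a volume t z := by
      intro hcon
      exact absurd (csInf_le hTbd ⟨h1, hcon⟩) (not_le.2 h2)
    show (∫ s in t..z, a s) ^ (-(1:ℝ)/2) = 0
    rw [intervalIntegral.integral_undef hni, Real.zero_rpow (by norm_num)]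
  have hAprop : ∀ t, t ∈ Ioo sI c → ContinuousAt (fun x => ∫ s in x..z, a s) t ∧
      0 < ∫ s in t..z, a s := by
    intro t ht
    have htz : t < z := lt_trans ht.2 hcz
    set t1 : ℝ := (sI + t)/2 with ht1
    have h1 : sI < t1 := by simp only [ht1]; linarith [ht.1]
    have h2 : t1 < t := by simp only [ht1]; linarith [ht.1]
    have hti : IntervalIntegrable a volume t1 z := hintgt t1 h1 (by linarith)
    set t2 : ℝ := (t1 + t)/2 with ht2
    have h3 : t1 < t2 := by simp only [ht2]; linarith
    have h4 : t2 < t := by simp only [ht2]; linarith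
    have hIcc2 : IntegrableOn a (Icc t2 z) volume :=
      ((intervalIntegrable_iff_integrableOn_Ioc_of_le (by linarith : t1 ≤ z)).1 hti).mono_set
        (fun r hr => ⟨lt_of_lt_of_le h3 hr.1, hr.2⟩)
    have hcont2 : ContinuousOn (fun x => ∫ s in x..z, a s) (Icc t2 z) := by
      have := intervalIntegral.continuousOn_primitive_interval_left
        (a := t2) (b := z) (μ := volume) (f := a)
        (by rwa [uIcc_of_le (by linarith : t2 ≤ z)])
      rwa [uIcc_of_le (by linarith : t2 ≤ z)] at this
    constructor
    · exact hcont2.continuousAt (Icc_mem_nhds h4 htz)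
    · exact hApos t (lt_of_le_of_lt hsI0 ht.1) htz (hintgt t ht.1 htz)
  have hAc : 0 < ∫ s in c..z, a s :=
    hApos c hcpos hcz (hint c (by linarith [hx0'1, hx0'c]) hcz.le)
  have hFbd : ∀ t, 0 < t → t < c → F t ≤ 1/Real.sqrt (∫ s in c..z, a s) := by
    intro t h1 h2
    by_cases hti : IntervalIntegrable a volume t z
    · have htz : t < z := lt_trans h2 hcz
      have hAt : 0 < ∫ s in t..z, a s := hApos t h1 htz hti
      have htc : IntervalIntegrable a volume t c := hti.mono_set
        (by rw [uIcc_of_le h2.le, uIcc_of_le htz.le]; exact Icc_subset_Icc le_rfl hcz.le)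
      have hcz' : IntervalIntegrable a volume c z :=
        hint c (by linarith [hx0'1, hx0'c]) hcz.le
      have hsplit2 : (∫ s in t..z, a s) = (∫ s in t..c, a s) + ∫ s in c..z, a s :=
        (intervalIntegral.integral_add_adjacent_intervals htc hcz').symm
      have hnn : 0 ≤ ∫ s in t..c, a s := by
        apply intervalIntegral.integral_nonneg_of_ae_restrict h2.le
        have hae2 : ∀ᵐ r ∂(volume.restrict (Icc t c)), 0 < a r := by
          rw [← Measure.restrict_congr_set Ioo_ae_eq_Icc]
          exact ae_restrict_of_ae_restrict_of_subset
            (Ioo_subset_Ioo h1.le hcz.le) hapos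
        exact hae2.mono fun r hr => hr.le
      have hle : (∫ s in c..z, a s) ≤ ∫ s in t..z, a s := by linarith
      show (∫ s in t..z, a s) ^ (-(1:ℝ)/2) ≤ _
      rw [hrpow hAt]
      exact one_div_le_one_div_of_le (Real.sqrt_pos.2 hAc) (Real.sqrt_le_sqrt hle)
    · show (∫ s in t..z, a s) ^ (-(1:ℝ)/2) ≤ _
      rw [intervalIntegral.integral_undef hti, Real.zero_rpow (by norm_num)]
      positivity
  have hmid : IntegrableOn F (Ioo sI c) volume := by
    constructor
    · have hcontF : ContinuousOn F (Ioo sI c) := by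
        intro t ht
        have := ((hAprop t ht).1).rpow_const (p := (-(1:ℝ)/2))
          (Or.inl (ne_of_gt (hAprop t ht).2))
        exact this.continuousWithinAt
      exact hcontF.aestronglyMeasurable measurableSet_Ioo
    · apply HasFiniteIntegral.restrict_of_bounded
        (C := 1/Real.sqrt (∫ s in c..z, a s)) measure_Ioo_lt_top
      filter_upwards [ae_restrict_mem measurableSet_Ioo] with t ht
      have htpos : 0 < t := lt_of_le_of_lt hsI0 ht.1
      rw [Real.norm_eq_abs, abs_of_nonneg (Real.rpow_nonneg (hAprop t ht).2.le _)]
      exact hFbd t htpos ht.2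
  have hlow : IntegrableOn F (Ioo 0 sI) volume := by
    have heq : EqOn F 0 (Ioo 0 sI) := fun t ht => hFzero t ht.1 ht.2
    exact (integrableOn_congr_fun heq measurableSet_Ioo).2 integrableOn_zero
  have hsing : IntegrableOn F {sI} volume := by
    rw [IntegrableOn, Measure.restrict_eq_zero.2 (by simp)]
    exact integrable_zero_measure
  have hfar : IntegrableOn F (Ioo 0 c) volume := by
    apply ((hlow.union hsing).union hmid).mono_set
    intro t ht
    rcases lt_trichotomy t sI with h | h | h
    · exact Or.inl (Or.inl ⟨ht.1, h⟩)
    · exact Or.inl (Or.inr (by simp [h]))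
    · exact Or.inr ⟨h, ht.2⟩
  have hIccR : IntegrableOn F (Icc c z) volume := by
    rw [integrableOn_Icc_iff_integrableOn_Ioc]
    exact hnear
  apply (hfar.union hIccR).mono_set
  intro t ht
  by_cases h : t < c
  · exact Or.inl ⟨ht.1, h⟩
  · exact Or.inr ⟨not_lt.1 h, ht.2.le⟩


set_option maxHeartbeats 1000000 in
theorem right_case (a f : ℝ → ℝ) (lam z : ℝ) (u u' : ℝ → ℝ)
    (hz0 : 0 < z) (hz1 : z < 1)
    (haneg : ∀ᵐ x ∂(volume.restrict (Ioo z 1)), a x < 0)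
    (hf : Continuous f) (hfnn : ∀ s, 0 ≤ s → 0 ≤ f s)
    (hlam : 0 < lam)
    (hubdd : ∃ C, ∀ x ∈ Icc (0:ℝ) 1, |u x| ≤ C)
    (hunn : ∀ x ∈ Icc (0:ℝ) 1, 0 ≤ u x)
    (hderiv : ∀ x ∈ (Ioo (0:ℝ) 1) \ {z}, HasDerivAt u (u' x) x)
    (hFTC2 : ∀ x ∈ Ioo z 1, ∀ y ∈ Ioo z 1,
      u' y / Real.sqrt (1 + (u' y) ^ 2) - u' x / Real.sqrt (1 + (u' x) ^ 2)
        = -∫ t in x..y, lam * a t * f (u t))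
    (hR : Tendsto u' (nhdsWithin z (Ioi z)) atBot) :
    IntegrableOn (fun x => (∫ t in x..z, a t) ^ (-(1:ℝ)/2)) (Ioo z 1) volume := by
  obtain ⟨Cu, hCu⟩ := hubdd
  have hCu0 : 0 ≤ Cu := le_trans (abs_nonneg _) (hCu 0 ⟨le_rfl, by linarith⟩)
  obtain ⟨xm, hxm, hmax⟩ := (isCompact_Icc (a := -Cu) (b := Cu)).exists_isMaxOn
    (nonempty_Icc.2 (by linarith)) hf.continuousOn
  set M : ℝ := max (f xm) 0 + 1 with hM
  have hM1 : 1 ≤ M := by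
    have := le_max_right (f xm) (0:ℝ); simp only [hM]; linarith
  have hM0 : 0 < M := by linarith
  have hfub : ∀ t, t ∈ Icc (0:ℝ) 1 → f (u t) ≤ M := by
    intro t ht
    have h1 : u t ∈ Icc (-Cu) Cu := abs_le.1 (hCu t ht)
    have := hmax h1
    simp only [hM]
    calc f (u t) ≤ f xm := this
      _ ≤ max (f xm) 0 + 1 := by linarith [le_max_left (f xm) (0:ℝ)]
  have hlamM : 0 < lam * M := by positivity
  have hAneg : ∀ x : ℝ, (∫ t in x..z, a t) = ∫ t in z..x, -a t := by
    intro x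
    rw [intervalIntegral.integral_neg, intervalIntegral.integral_symm]
  set F : ℝ → ℝ := fun x => (∫ t in x..z, a t) ^ (-(1:ℝ)/2) with hF
  by_cases hS : ∃ x0 ∈ Ioo z 1, IntervalIntegrable a volume x0 z
  swap
  · push_neg at hS
    have heq : EqOn F 0 (Ioo z 1) := by
      intro x hx
      simp only [hF, Pi.zero_apply]
      rw [intervalIntegral.integral_undef (hS x hx), Real.zero_rpow (by norm_num)]
    exact (integrableOn_congr_fun heq measurableSet_Ioo).2 (integrableOn_zero)
  obtain ⟨x0, hx00, hx0int⟩ := hS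
  have hx0z : z < x0 := hx00.1
  have hx01 : x0 < 1 := hx00.2
  -- interval integrability between z and x0
  have hint : ∀ x, z ≤ x → x ≤ x0 → IntervalIntegrable a volume x z := by
    intro x h1 h2
    apply hx0int.mono_set
    rw [uIcc_comm x z, uIcc_comm x0 z, uIcc_of_le h1, uIcc_of_le hx0z.le]
    exact Icc_subset_Icc le_rfl h2
  -- positivity of A
  have hApos : ∀ x, z < x → x < 1 → IntervalIntegrable a volume x z →
      0 < ∫ t in x..z, a t := by
    intro x h1 h2 hi
    rw [hAneg x, intervalIntegral.integral_of_le h1.le]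
    apply pos_setIntegral h1
    · exact ((intervalIntegrable_iff_integrableOn_Ioc_of_le h1.le).1 hi.symm).neg
    · have : ∀ᵐ t ∂(volume.restrict (Ioc z x)), a t < 0 := by
        rw [← Measure.restrict_congr_set Ioo_ae_eq_Ioc]
        exact ae_restrict_of_ae_restrict_of_subset
          (Ioo_subset_Ioo le_rfl h2.le) haneg
      exact this.mono fun t ht => by simpa using ht
  -- continuity of A near z (on [z, x0'])
  set x0' : ℝ := (z + x0)/2 with hx0'
  have hx0'1 : z < x0' := by simp only [hx0']; linarith
  have hx0'2 : x0' < x0 := by simp only [hx0']; linarith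
  have hx0'lt1 : x0' < 1 := by linarith
  have hAcont : ContinuousOn (fun x => ∫ t in x..z, a t) (Icc z x0') := by
    have h1 : IntegrableOn a (Icc z x0') volume := by
      rw [integrableOn_Icc_iff_integrableOn_Ioc]
      exact ((intervalIntegrable_iff_integrableOn_Ioc_of_le hx0z.le).1 hx0int.symm).mono_set
        (Ioc_subset_Ioc le_rfl hx0'2.le)
    have := intervalIntegral.continuousOn_primitive_interval_left
      (a := x0') (b := z) (μ := volume) (f := a)
      (by rwa [uIcc_comm, uIcc_of_le hx0'1.le])
    rwa [uIcc_comm, uIcc_of_le hx0'1.le] at this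
  have hA0 : Tendsto (fun x => ∫ t in x..z, a t) (nhdsWithin z (Ioi z)) (𝓝 0) := by
    have hc : ContinuousWithinAt (fun x => ∫ t in x..z, a t) (Icc z x0') z :=
      hAcont z (left_mem_Icc.2 hx0'1.le)
    have hz' : (∫ t in z..z, a t) = 0 := intervalIntegral.integral_same
    have hc' : Tendsto (fun x => ∫ t in x..z, a t) (nhdsWithin z (Icc z x0')) (𝓝 0) := by
      rw [← hz']; exact hc
    exact hc'.mono_left (nhdsWithin_le_of_mem
      (mem_of_superset (Ioo_mem_nhdsGT hx0'1) Ioo_subset_Icc_self))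
  -- choose threshold x3
  have e1 : ∀ᶠ x in nhdsWithin z (Ioi z), u' x < 0 := hR.eventually (eventually_lt_atBot 0)
  have e3 : ∀ᶠ x in nhdsWithin z (Ioi z), (∫ t in x..z, a t) < 1/(4*(lam*M)) :=
    hA0.eventually (eventually_lt_nhds (by positivity))
  have e2 : ∀ᶠ x in nhdsWithin z (Ioi z), x ∈ Ioo z x0' := by
    filter_upwards [Ioo_mem_nhdsGT hx0'1] with x hx using hx
  obtain ⟨r, hrz, hrsub⟩ := mem_nhdsGT_iff_exists_Ioo_subset.1 (e1.and (e2.and e3))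
  set x3 : ℝ := min r x0' with hx3
  have hx3z : z < x3 := lt_min hrz hx0'1
  have hx3le : x3 ≤ x0' := min_le_right _ _
  have hx3prop : ∀ x, x ∈ Ioo z x3 → u' x < 0 ∧ x ∈ Ioo z x0' ∧
      (∫ t in x..z, a t) < 1/(4*(lam*M)) := by
    intro x hx
    have := hrsub ⟨hx.1, lt_of_lt_of_le hx.2 (min_le_left r x0')⟩
    exact ⟨this.1, this.2.1, this.2.2⟩
  -- continuity of f ∘ u on compacts inside (z, 1)
  have hfu_cont : ∀ p q : ℝ, z < p → q < 1 → ContinuousOn (fun t => f (u t)) (Icc p q) := by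
    intro p q hp hq t ht
    have htmem : t ∈ (Ioo (0:ℝ) 1) \ {z} := by
      constructor
      · exact ⟨by linarith [ht.1], by linarith [ht.2]⟩
      · simp only [mem_singleton_iff]
        intro hc; rw [hc] at ht; linarith [ht.1]
    exact (hf.continuousAt.comp (hderiv t htmem).continuousAt).continuousWithinAt
  set c : ℝ := (z + x3)/2 with hc
  have hcx3 : c < x3 := by simp only [hc]; linarith
  have hcz : z < c := by simp only [hc]; linarith
  have hc1 : c < 1 := by linarith
  have hu'cont : ∀ y, y ∈ Ioc z c → ContinuousOn u' (Icc y c) := by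
    intro y hy
    have hyc : y ≤ c := hy.2
    have hyz : z < y := hy.1
    have hfu : ContinuousOn (fun t => f (u t)) (Icc y c) := hfu_cont y c hyz hc1
    have hca : IntervalIntegrable a volume y c := by
      apply hx0int.symm.mono_set
      rw [uIcc_of_le hyc, uIcc_of_le hx0z.le]
      exact Icc_subset_Icc hyz.le (by linarith)
    have hh_int : IntervalIntegrable (fun t => lam * a t * f (u t)) volume y c := by
      apply IntervalIntegrable.mul_continuousOn (hca.const_mul lam)
      rwa [uIcc_of_le hyc]
    set ψ : ℝ → ℝ := fun t =>
      u' c / Real.sqrt (1 + (u' c)^2) - ∫ s in c..t, lam * a s * f (u s) with hψdef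
    have hψφ : ∀ t ∈ Icc y c, ψ t = u' t / Real.sqrt (1 + (u' t)^2) := by
      intro t ht
      have hcI : c ∈ Ioo z 1 := ⟨hcz, hc1⟩
      have htI : t ∈ Ioo z 1 := ⟨lt_of_lt_of_le hyz ht.1, by linarith [ht.2]⟩
      have := hFTC2 c hcI t htI
      simp only [hψdef]
      linarith [this]
    have hψcont : ContinuousOn ψ (Icc y c) := by
      apply continuousOn_const.sub
      have := intervalIntegral.continuousOn_primitive_interval (a := c) (b := y) (μ := volume)
        (f := fun t => lam * a t * f (u t)) ((intervalIntegrable_iff' enorm_ne_top).1 hh_int.symm)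
      rwa [uIcc_comm, uIcc_of_le hyc] at this
    have hsq : ∀ t ∈ Icc y c, Real.sqrt (1 - ψ t^2) ≠ 0 := by
      intro t ht
      have h1 : |ψ t| < 1 := by rw [hψφ t ht]; exact phi_abs_lt_one _
      have h2 : ψ t ^ 2 < 1 := by nlinarith [abs_lt.1 h1]
      exact ne_of_gt (Real.sqrt_pos.2 (by linarith))
    apply ContinuousOn.congr
      (f := fun t => ψ t / Real.sqrt (1 - ψ t ^2))
      (hψcont.div ((continuousOn_const.sub (hψcont.pow 2)).sqrt) hsq)
    intro t ht
    simp only [hψφ t ht]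
    exact (phi_inv (u' t)).symm
  -- the key pointwise estimate
  have key : ∀ x, x ∈ Ioo z x3 →
      (∫ t in x..z, a t) ^ (-(1:ℝ)/2) ≤ Real.sqrt (4*(lam*M)) * (-u' x) := by
    intro x hx
    obtain ⟨hu'x, hx', hAxlt⟩ := hx3prop x hx
    have hxz : z < x := hx.1
    have hx1 : x < 1 := by linarith [hx'.2, hx0'lt1]
    have hxint : IntervalIntegrable a volume x z := hint x hxz.le (by linarith [hx'.2, hx0'2])
    have hAx : 0 < ∫ t in x..z, a t := hApos x hxz hx1 hxint
    have step1 : 1 + u' x / Real.sqrt (1 + (u' x)^2) ≤ lam * M * ∫ t in x..z, a t := by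
      apply le_of_forall_pos_le_add
      intro ε hε
      have ev1 : ∀ᶠ y in nhdsWithin z (Ioi z),
          u' y ≤ -(Real.sqrt (1/(2*ε)) + 1) := hR.eventually (eventually_le_atBot _)
      have ev2 : ∀ᶠ y in nhdsWithin z (Ioi z), y ∈ Ioo z x := by
        filter_upwards [Ioo_mem_nhdsGT hxz] with y hy using hy
      obtain ⟨y, hy1, hy2⟩ := (ev1.and ev2).exists
      have hsq0 : 0 ≤ Real.sqrt (1/(2*ε)) := Real.sqrt_nonneg _
      have hy0 : u' y < 0 := by linarith
      have hφy : 1 + u' y / Real.sqrt (1 + (u' y)^2) ≤ ε := by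
        have h1 := auxL1 hy0
        have h2 : Real.sqrt (1/(2*ε)) ^ 2 = 1/(2*ε) := Real.sq_sqrt (by positivity)
        have h3 : 1/(2*ε) ≤ (u' y)^2 := by nlinarith
        have h4 : 1/(2*(u' y)^2) ≤ ε := by
          rw [div_le_iff₀ (by nlinarith : (0:ℝ) < 2*(u' y)^2)]
          rw [div_le_iff₀ (by positivity)] at h3
          nlinarith
        linarith
      have hyx : y ≤ x := hy2.2.le
      have hxI : x ∈ Ioo z 1 := ⟨hxz, hx1⟩
      have hyI : y ∈ Ioo z 1 := ⟨hy2.1, by linarith [hy2.2]⟩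
      have hFT := hFTC2 y hyI x hxI
      have hay : IntervalIntegrable a volume y x := by
        apply hx0int.symm.mono_set
        rw [uIcc_of_le hyx, uIcc_of_le hx0z.le]
        exact Icc_subset_Icc hy2.1.le (by linarith [hx'.2, hx0'2])
      have hh_int : IntervalIntegrable (fun t => lam * (-a t) * f (u t)) volume y x := by
        apply IntervalIntegrable.mul_continuousOn ((hay.neg).const_mul lam)
        rw [uIcc_of_le hyx]
        exact hfu_cont y x hy2.1 hx1
      have hma : IntervalIntegrable (fun t => lam * M * (-a t)) volume y x :=
        (hay.neg).const_mul (lam * M)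
      have hmono : (∫ t in y..x, lam * (-a t) * f (u t)) ≤ ∫ t in y..x, lam * M * (-a t) := by
        apply intervalIntegral.integral_mono_ae_restrict hyx hh_int hma
        have hpos' : ∀ᵐ t ∂(volume.restrict (Icc y x)), a t < 0 := by
          rw [← Measure.restrict_congr_set Ioo_ae_eq_Icc]
          exact ae_restrict_of_ae_restrict_of_subset
            (Ioo_subset_Ioo hy2.1.le hx1.le) haneg
        filter_upwards [hpos', ae_restrict_mem measurableSet_Icc] with t hta htmem
        have ht01 : t ∈ Icc (0:ℝ) 1 :=
          ⟨by linarith [htmem.1, hy2.1], by linarith [htmem.2]⟩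
        have h5 : 0 ≤ f (u t) := hfnn _ (hunn t ht01)
        have h6 : f (u t) ≤ M := hfub t ht01
        nlinarith [mul_nonneg (mul_pos hlam (by linarith : (0:ℝ) < -a t)).le (sub_nonneg.2 h6)]
      have h7 : IntervalIntegrable a volume z y := by
        apply hx0int.symm.mono_set
        rw [uIcc_of_le hy2.1.le, uIcc_of_le hx0z.le]
        exact Icc_subset_Icc le_rfl (by linarith [hx'.2, hx0'2])
      have hsplit : (∫ t in y..x, -a t) = (∫ t in x..z, a t) - ∫ t in y..z, a t := by
        have := intervalIntegral.integral_add_adjacent_intervals (μ := volume)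
          (f := fun t => -a t) (a := z) (b := y) (c := x) (h7.neg) (hay.neg)
        rw [hAneg x, hAneg y]
        linarith
      have hAy : 0 ≤ ∫ t in y..z, a t := by
        rw [hAneg y, intervalIntegral.integral_of_le hy2.1.le]
        apply setIntegral_nonneg_of_ae_restrict
        have : ∀ᵐ t ∂(volume.restrict (Ioc z y)), a t < 0 := by
          rw [← Measure.restrict_congr_set Ioo_ae_eq_Ioc]
          exact ae_restrict_of_ae_restrict_of_subset
            (Ioo_subset_Ioo le_rfl (by linarith [hy2.2])) haneg
        exact this.mono fun t ht => by simpa using ht.le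
      have hcalc : (∫ t in y..x, lam * M * (-a t)) = lam * M * ∫ t in y..x, -a t := by
        simpa using intervalIntegral.integral_const_mul (lam*M) (fun t => -a t)
          (a := y) (b := x)
      have hneg_eq : (∫ t in y..x, lam * a t * f (u t))
          = -∫ t in y..x, lam * (-a t) * f (u t) := by
        rw [← intervalIntegral.integral_neg]
        congr 1
        ext t
        ring
      have hcomb : u' x / Real.sqrt (1 + (u' x)^2) - u' y / Real.sqrt (1 + (u' y)^2)
          ≤ lam * M * ∫ t in x..z, a t := by
        have h8 : u' x / Real.sqrt (1 + (u' x)^2) - u' y / Real.sqrt (1 + (u' y)^2)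
            = ∫ t in y..x, lam * (-a t) * f (u t) := by
          rw [← neg_neg (∫ t in y..x, lam * (-a t) * f (u t)), ← hneg_eq]
          linarith [hFT]
        rw [h8]
        calc (∫ t in y..x, lam * (-a t) * f (u t)) ≤ ∫ t in y..x, lam * M * (-a t) := hmono
          _ = lam * M * ∫ t in y..x, -a t := hcalc
          _ = lam * M * ((∫ t in x..z, a t) - ∫ t in y..z, a t) := by rw [hsplit]
          _ ≤ lam * M * ∫ t in x..z, a t := by nlinarith
      linarith
    have step2 : 1/(2*(1+(u' x)^2)) ≤ lam * M * ∫ t in x..z, a t :=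
      le_trans (auxL2 (u' x)) step1
    have h9 : 1 ≤ 2 * (lam * M * ∫ t in x..z, a t) * (1+(u' x)^2) := by
      rw [div_le_iff₀ (by positivity)] at step2
      linarith
    have hA4 : lam * M * (∫ t in x..z, a t) ≤ 1/4 := by
      rw [lt_div_iff₀ (by positivity)] at hAxlt
      nlinarith
    have h10 : 1/(4*(lam*M)*(∫ t in x..z, a t)) ≤ (u' x)^2 := by
      rw [div_le_iff₀ (by positivity)]
      nlinarith [sq_nonneg (u' x)]
    have h11 : Real.sqrt (1/(4*(lam*M)*(∫ t in x..z, a t))) ≤ -u' x := by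
      rw [show (-u' x) = |u' x| from (abs_of_neg hu'x).symm, ← Real.sqrt_sq_eq_abs]
      exact Real.sqrt_le_sqrt h10
    have h12 : (∫ t in x..z, a t) ^ (-(1:ℝ)/2) = 1/Real.sqrt (∫ t in x..z, a t) := by
      rw [show (-(1:ℝ)/2) = -(1/2 : ℝ) by norm_num, Real.rpow_neg hAx.le,
        ← Real.sqrt_eq_rpow, one_div]
    rw [h12]
    have h13 : Real.sqrt (1/(4*(lam*M)*(∫ t in x..z, a t)))
        = 1/(Real.sqrt (4*(lam*M)) * Real.sqrt (∫ t in x..z, a t)) := by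
      rw [one_div, Real.sqrt_inv, Real.sqrt_mul (by positivity), one_div]
    rw [h13] at h11
    have hs4 : 0 < Real.sqrt (4*(lam*M)) := Real.sqrt_pos.2 (by positivity)
    have hsA : 0 < Real.sqrt (∫ t in x..z, a t) := Real.sqrt_pos.2 hAx
    rw [div_le_iff₀ hsA]
    rw [div_le_iff₀ (by positivity)] at h11
    nlinarith
  -- rpow to sqrt helper
  have hrpow : ∀ {A : ℝ}, 0 < A → A ^ (-(1:ℝ)/2) = 1/Real.sqrt A := by
    intro A hA
    rw [show (-(1:ℝ)/2) = -(1/2 : ℝ) by norm_num, Real.rpow_neg hA.le,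
      ← Real.sqrt_eq_rpow, one_div]
  -- integrability near z
  set b : ℕ → ℝ := fun n => z + (c-z)/(n+1) with hb
  have hbmem : ∀ n : ℕ, b n ∈ Ioc z c := by
    intro n
    have h1 : (0:ℝ) < (n:ℝ)+1 := by positivity
    have h2 : (c-z)/((n:ℝ)+1) ≤ c - z := by
      rw [div_le_iff₀ h1]
      nlinarith [hcz, Nat.cast_nonneg (α := ℝ) n]
    have h3 : 0 < (c-z)/((n:ℝ)+1) := div_pos (by linarith) h1
    constructor
    · simp only [hb]; linarith
    · simp only [hb]; linarith
  have hbtend : Tendsto b atTop (𝓝 z) := by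
    have h1 : Tendsto (fun n:ℕ => (c-z) * (1/((n:ℝ)+1))) atTop (𝓝 ((c-z)*0)) :=
      tendsto_const_nhds.mul tendsto_one_div_add_atTop_nhds_zero_nat
    have h2 : Tendsto (fun n:ℕ => z + (c-z)*(1/((n:ℝ)+1))) atTop (𝓝 (z + (c-z)*0)) :=
      tendsto_const_nhds.add h1
    simp only [mul_zero, add_zero, mul_one_div] at h2
    exact h2
  have hx3lt1 : x3 < 1 := by linarith [hx3le, hx0'lt1]
  have hFcontR : ∀ y, y ∈ Ioc z c → ContinuousOn F (Icc y c) := by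
    intro y hy
    show ContinuousOn (fun x => (∫ t in x..z, a t) ^ (-(1:ℝ)/2)) (Icc y c)
    apply ContinuousOn.rpow_const
    · apply hAcont.mono
      intro t ht
      exact ⟨by linarith [ht.1, hy.1], by linarith [ht.2, hcx3, hx3le]⟩
    · intro t ht
      left
      have htz : z < t := lt_of_lt_of_le hy.1 ht.1
      have ht1 : t < 1 := by linarith [ht.2]
      exact ne_of_gt (hApos t htz ht1
        (hint t htz.le (by linarith [ht.2, hcx3, hx3le, hx0'2])))
  have hFintR : ∀ n : ℕ, IntegrableOn F (Ioc (b n) c) volume := by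
    intro n
    exact ((hFcontR _ (hbmem n)).integrableOn_Icc).mono_set Ioc_subset_Icc_self
  have hKbound : ∀ n : ℕ, (∫ x in Ioc (b n) c, ‖F x‖) ≤ Real.sqrt (4*(lam*M)) * (2*Cu) := by
    intro n
    obtain ⟨hzb, hbc⟩ := hbmem n
    have hsubset : Icc (b n) c ⊆ Ioo z x3 := fun t ht =>
      ⟨lt_of_lt_of_le hzb ht.1, lt_of_le_of_lt ht.2 hcx3⟩
    have hu'c : ContinuousOn u' (Icc (b n) c) := hu'cont _ ⟨hzb, hbc⟩
    have hFc : ContinuousOn F (Icc (b n) c) := hFcontR _ ⟨hzb, hbc⟩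
    have hint1 : IntervalIntegrable (fun x => ‖F x‖) volume (b n) c := by
      apply ContinuousOn.intervalIntegrable
      rw [uIcc_of_le hbc]; exact hFc.norm
    have hint2 : IntervalIntegrable (fun x => Real.sqrt (4*(lam*M)) * (-u' x)) volume (b n) c := by
      apply ContinuousOn.intervalIntegrable
      rw [uIcc_of_le hbc]
      exact continuousOn_const.mul hu'c.neg
    have hu'int : IntervalIntegrable u' volume (b n) c := by
      apply ContinuousOn.intervalIntegrable
      rwa [uIcc_of_le hbc]
    have hFTCu : (∫ t in (b n)..c, u' t) = u c - u (b n) := by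
      apply intervalIntegral.integral_eq_sub_of_hasDerivAt _ hu'int
      intro t ht
      rw [uIcc_of_le hbc] at ht
      apply hderiv
      refine ⟨⟨by linarith [ht.1, hzb], by linarith [ht.2]⟩, ?_⟩
      simp only [mem_singleton_iff]
      intro hcEq
      rw [hcEq] at ht
      linarith [ht.1, hzb]
    rw [← intervalIntegral.integral_of_le hbc]
    have hmono2 : (∫ x in (b n)..c, ‖F x‖)
        ≤ ∫ x in (b n)..c, Real.sqrt (4*(lam*M)) * (-u' x) := by
      apply intervalIntegral.integral_mono_on hbc hint1 hint2
      intro t ht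
      have htm := hsubset ht
      have htz : z < t := htm.1
      have ht1 : t < 1 := by linarith [htm.2]
      have hFnn : 0 ≤ F t :=
        Real.rpow_nonneg (le_of_lt (hApos t htz ht1
          (hint t htz.le (by linarith [htm.2, hx3le, hx0'2])))) _
      rw [Real.norm_eq_abs, abs_of_nonneg hFnn]
      exact key t htm
    have hval : (∫ x in (b n)..c, Real.sqrt (4*(lam*M)) * (-u' x))
        = Real.sqrt (4*(lam*M)) * (u (b n) - u c) := by
      have h1 : (∫ x in (b n)..c, Real.sqrt (4*(lam*M)) * (-u' x))
          = Real.sqrt (4*(lam*M)) * ∫ x in (b n)..c, (-u' x) := by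
        simpa using intervalIntegral.integral_const_mul (Real.sqrt (4*(lam*M)))
          (fun x => -u' x) (a := b n) (b := c)
      rw [h1, intervalIntegral.integral_neg, hFTCu]
      ring
    have hfin : Real.sqrt (4*(lam*M)) * (u (b n) - u c) ≤ Real.sqrt (4*(lam*M)) * (2*Cu) := by
      apply mul_le_mul_of_nonneg_left _ (Real.sqrt_nonneg _)
      have h1 := abs_le.1 (hCu c ⟨by linarith, hc1.le⟩)
      have h2 := abs_le.1 (hCu (b n) ⟨by linarith [hzb], by linarith [hbc]⟩)
      linarith [h1.1, h1.2, h2.1, h2.2]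
    calc (∫ x in (b n)..c, ‖F x‖) ≤ _ := hmono2
      _ = _ := hval
      _ ≤ _ := hfin
  have hnear : IntegrableOn F (Ioc z c) volume :=
    MeasureTheory.integrableOn_Ioc_of_intervalIntegral_norm_bounded_left hFintR hbtend
      (Eventually.of_forall hKbound)
  -- far region
  set T : Set ℝ := {t : ℝ | t < 1 ∧ IntervalIntegrable a volume t z} with hT
  have hTne : T.Nonempty := ⟨x0, hx01, hx0int⟩
  have hTbd : BddAbove T := ⟨1, fun t ht => ht.1.le⟩
  set sI : ℝ := sSup T with hsI
  have hsI_ge : x0 ≤ sI := le_csSup hTbd ⟨hx01, hx0int⟩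
  have hsI1 : sI ≤ 1 := csSup_le hTne (fun t ht => ht.1.le)
  have hcsI : c < sI := by linarith [hcx3, hx3le, hx0'2]
  have hintlt : ∀ t, z < t → t < sI → IntervalIntegrable a volume t z := by
    intro t h1 h2
    obtain ⟨t', ht'T, htlt⟩ := exists_lt_of_lt_csSup hTne h2
    apply ht'T.2.mono_set
    rw [uIcc_comm t z, uIcc_comm t' z, uIcc_of_le h1.le,
      uIcc_of_le (le_trans h1.le htlt.le)]
    exact Icc_subset_Icc le_rfl htlt.le
  have hFzero : ∀ t, sI < t → t < 1 → F t = 0 := by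
    intro t h1 h2
    have hni : ¬ IntervalIntegrable a volume t z := by
      intro hcon
      exact absurd (le_csSup hTbd ⟨h2, hcon⟩) (not_le.2 h1)
    show (∫ s in t..z, a s) ^ (-(1:ℝ)/2) = 0
    rw [intervalIntegral.integral_undef hni, Real.zero_rpow (by norm_num)]
  have hAprop : ∀ t, t ∈ Ioo c sI → ContinuousAt (fun x => ∫ s in x..z, a s) t ∧
      0 < ∫ s in t..z, a s := by
    intro t ht
    have htz : z < t := lt_trans hcz ht.1
    have ht1 : t < 1 := lt_of_lt_of_le ht.2 hsI1
    set t1 : ℝ := (t + sI)/2 with ht1d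
    have h1 : t < t1 := by simp only [ht1d]; linarith [ht.2]
    have h2 : t1 < sI := by simp only [ht1d]; linarith [ht.2]
    have hti : IntervalIntegrable a volume t1 z := hintlt t1 (by linarith) h2
    set t2 : ℝ := (t + t1)/2 with ht2d
    have h3 : t < t2 := by simp only [ht2d]; linarith
    have h4 : t2 < t1 := by simp only [ht2d]; linarith
    have hIcc2 : IntegrableOn a (Icc z t2) volume := by
      rw [integrableOn_Icc_iff_integrableOn_Ioc]
      exact ((intervalIntegrable_iff_integrableOn_Ioc_of_le
        (by linarith : z ≤ t1)).1 hti.symm).mono_set (Ioc_subset_Ioc le_rfl h4.le)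
    have hcont2 : ContinuousOn (fun x => ∫ s in x..z, a s) (Icc z t2) := by
      have := intervalIntegral.continuousOn_primitive_interval_left
        (a := t2) (b := z) (μ := volume) (f := a)
        (by rwa [uIcc_comm, uIcc_of_le (by linarith : z ≤ t2)])
      rwa [uIcc_comm, uIcc_of_le (by linarith : z ≤ t2)] at this
    constructor
    · exact hcont2.continuousAt (Icc_mem_nhds htz h3)
    · exact hApos t htz ht1 (hintlt t htz ht.2)
  have hAc : 0 < ∫ s in c..z, a s :=
    hApos c hcz hc1 (hint c hcz.le (by linarith [hcx3, hx3le, hx0'2]))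
  have hFbd : ∀ t, t ∈ Ioo c sI → F t ≤ 1/Real.sqrt (∫ s in c..z, a s) := by
    intro t ht
    have htz : z < t := lt_trans hcz ht.1
    have ht1 : t < 1 := lt_of_lt_of_le ht.2 hsI1
    have hti : IntervalIntegrable a volume t z := hintlt t htz ht.2
    have hAt : 0 < ∫ s in t..z, a s := hApos t htz ht1 hti
    have hct : IntervalIntegrable (fun s => -a s) volume c t := by
      apply (hti.symm.neg).mono_set
      rw [uIcc_of_le ht.1.le, uIcc_of_le htz.le]
      exact Icc_subset_Icc hcz.le le_rfl
    have hzc : IntervalIntegrable (fun s => -a s) volume z c := by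
      apply (hti.symm.neg).mono_set
      rw [uIcc_of_le hcz.le, uIcc_of_le htz.le]
      exact Icc_subset_Icc le_rfl ht.1.le
    have hsplit2 : (∫ s in t..z, a s) = (∫ s in c..z, a s) + ∫ s in c..t, -a s := by
      have := intervalIntegral.integral_add_adjacent_intervals (μ := volume)
        (f := fun s => -a s) (a := z) (b := c) (c := t) hzc hct
      rw [hAneg t, hAneg c]
      linarith
    have hnn : 0 ≤ ∫ s in c..t, -a s := by
      apply intervalIntegral.integral_nonneg_of_ae_restrict ht.1.le
      have hae2 : ∀ᵐ r ∂(volume.restrict (Icc c t)), a r < 0 := by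
        rw [← Measure.restrict_congr_set Ioo_ae_eq_Icc]
        exact ae_restrict_of_ae_restrict_of_subset
          (Ioo_subset_Ioo hcz.le ht1.le) haneg
      exact hae2.mono fun r hr => by simpa using hr.le
    have hle : (∫ s in c..z, a s) ≤ ∫ s in t..z, a s := by linarith
    show (∫ s in t..z, a s) ^ (-(1:ℝ)/2) ≤ _
    rw [hrpow hAt]
    exact one_div_le_one_div_of_le (Real.sqrt_pos.2 hAc) (Real.sqrt_le_sqrt hle)
  have hmid : IntegrableOn F (Ioo c sI) volume := by
    constructor
    · have hcontF : ContinuousOn F (Ioo c sI) := by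
        intro t ht
        have := ((hAprop t ht).1).rpow_const (p := (-(1:ℝ)/2))
          (Or.inl (ne_of_gt (hAprop t ht).2))
        exact this.continuousWithinAt
      exact hcontF.aestronglyMeasurable measurableSet_Ioo
    · apply HasFiniteIntegral.restrict_of_bounded
        (C := 1/Real.sqrt (∫ s in c..z, a s)) measure_Ioo_lt_top
      filter_upwards [ae_restrict_mem measurableSet_Ioo] with t ht
      rw [Real.norm_eq_abs, abs_of_nonneg (Real.rpow_nonneg (hAprop t ht).2.le _)]
      exact hFbd t ht
  have hhigh : IntegrableOn F (Ioo sI 1) volume := by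
    have heq : EqOn F 0 (Ioo sI 1) := fun t ht => hFzero t ht.1 ht.2
    exact (integrableOn_congr_fun heq measurableSet_Ioo).2 integrableOn_zero
  have hsing : IntegrableOn F {sI} volume := by
    rw [IntegrableOn, Measure.restrict_eq_zero.2 (by simp)]
    exact integrable_zero_measure
  have hfar : IntegrableOn F (Ioo c 1) volume := by
    apply ((hmid.union hsing).union hhigh).mono_set
    intro t ht
    rcases lt_trichotomy t sI with h | h | h
    · exact Or.inl (Or.inl ⟨ht.1, h⟩)
    · exact Or.inl (Or.inr (by simp [h]))
    · exact Or.inr ⟨h, ht.2⟩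
  have hIccL : IntegrableOn F (Icc z c) volume := by
    rw [integrableOn_Icc_iff_integrableOn_Ioc]
    exact hnear
  apply (hIccL.union hfar).mono_set
  intro t ht
  by_cases h : t ≤ c
  · exact Or.inl ⟨ht.1.le, h⟩
  · exact Or.inr ⟨not_le.1 h, ht.2⟩


theorem stmt10 (a f : ℝ → ℝ) (lam z : ℝ) (u u' : ℝ → ℝ)
    (hz : z ∈ Ioo (0:ℝ) 1)
    (habd : ∃ C, ∀ᵐ x ∂(volume.restrict (Ioo (0:ℝ) 1)), |a x| ≤ C)
    (hapos : ∀ᵐ x ∂(volume.restrict (Ioo (0:ℝ) z)), 0 < a x)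
    (haneg : ∀ᵐ x ∂(volume.restrict (Ioo z 1)), a x < 0)
    (hdiv : (¬ IntegrableOn (fun x => (∫ t in x..z, a t) ^ (-(1:ℝ)/2))
        (Ioo 0 z) volume) ∨
      (¬ IntegrableOn (fun x => (∫ t in x..z, a t) ^ (-(1:ℝ)/2))
        (Ioo z 1) volume))
    (hf : Continuous f) (hfnn : ∀ s, 0 ≤ s → 0 ≤ f s)
    (hlam : 0 < lam)
    (hubdd : ∃ C, ∀ x ∈ Icc (0:ℝ) 1, |u x| ≤ C)
    (hunn : ∀ x ∈ Icc (0:ℝ) 1, 0 ≤ u x)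
    (hconc : ConcaveOn ℝ (Ioo 0 z) u) (hconv : ConvexOn ℝ (Ioo z 1) u)
    (hderiv : ∀ x ∈ (Ioo (0:ℝ) 1) \ {z}, HasDerivAt u (u' x) x)
    (hFTC1 : ∀ x ∈ Ioo (0:ℝ) z, ∀ y ∈ Ioo (0:ℝ) z,
      u' y / Real.sqrt (1 + (u' y) ^ 2) - u' x / Real.sqrt (1 + (u' x) ^ 2)
        = -∫ t in x..y, lam * a t * f (u t))
    (hFTC2 : ∀ x ∈ Ioo z 1, ∀ y ∈ Ioo z 1,
      u' y / Real.sqrt (1 + (u' y) ^ 2) - u' x / Real.sqrt (1 + (u' x) ^ 2)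
        = -∫ t in x..y, lam * a t * f (u t)) :
    ¬ (Tendsto u' (nhdsWithin z (Iio z)) atBot ∧
       Tendsto u' (nhdsWithin z (Ioi z)) atBot) := by
  rintro ⟨hL, hR⟩
  rcases hdiv with hd | hd
  · exact hd (left_case a f lam z u u' hz.1 hz.2 hapos hf hfnn hlam
      ⟨_, hubdd.choose_spec⟩ hunn hderiv hFTC1 hL)
  · exact hd (right_case a f lam z u u' hz.1 hz.2 haneg hf hfnn hlam
      ⟨_, hubdd.choose_spec⟩ hunn hderiv hFTC2 hR)
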